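/- Let k : ℝᵈ × ℝᵈ → ℝ be a symmetric positive-semidefinite kernel that is continuously differentiable with all first-order partial derivatives bounded in absolute value by L_k ≥ 0, and such that k(x,y) ≤ k_max for all x, y ∈ ℝᵈ, where k_max > 0. Fix a test point x_ref ∈ ℝᵈ, a noise level σ > 0, and n ∈ ℕ. Then the map (x₁,…,xₙ) ↦ σ²_{(x₁,…,xₙ)}(x_ref) from (ℝᵈ)ⁿ to ℝ, sending a data tuple to the GP posterior variance at x_ref, is Lipschitz continuous with respect to the ℓ¹-norm on (ℝᵈ)ⁿ ≅ ℝ^{n·d} with Lipschitz constant L_σ = (2·L_k·√k_max/σ)·(1 + √(n·k_max)/σ). -/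

import Mathlib

open Matrix

/-- The kernel matrix `[k(p i, p j)]_{i,j}` of a tuple of points. -/
noncomputable def kerMat {α : Type*} {m : ℕ} (k : α → α → ℝ) (p : Fin m → α) :
    Matrix (Fin m) (Fin m) ℝ :=
  Matrix.of fun i j => k (p i) (p j)

/-- The GP posterior variance at a test point `z` given data points `p` and
noise variance `σ²`:
`σ²_p(z) = k(z,z) − k_p(z)ᵀ (K_p + σ² I)⁻¹ k_p(z)`. -/
noncomputable def postVar {α : Type*} {m : ℕ} (k : α → α → ℝ) (σ : ℝ) (p : Fin m → α)
    (z : α) : ℝ :=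
  k z z - (fun i => k (p i) z) ⬝ᵥ
    ((kerMat k p + σ ^ 2 • (1 : Matrix (Fin m) (Fin m) ℝ))⁻¹ *ᵥ fun i => k (p i) z)


section AuxLemmas


lemma det_diffAt {m : ℕ} {M : ℝ → Matrix (Fin m) (Fin m) ℝ} {t : ℝ}
    (h : ∀ l r, DifferentiableAt ℝ (fun s => M s l r) t) :
    DifferentiableAt ℝ (fun s => (M s).det) t := by
  simp only [Matrix.det_apply']
  apply DifferentiableAt.fun_sum
  intro σ _
  apply DifferentiableAt.const_mul
  exact DifferentiableAt.fun_finsetProd (fun i _ => h (σ i) i)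

lemma inv_entry_diffAt {m : ℕ} {M : ℝ → Matrix (Fin m) (Fin m) ℝ} {t : ℝ}
    (h : ∀ l r, DifferentiableAt ℝ (fun s => M s l r) t) (hdet : (M t).det ≠ 0) :
    ∀ l r, DifferentiableAt ℝ (fun s => (M s)⁻¹ l r) t := by
  intro l r
  have heq : (fun s => (M s)⁻¹ l r) = fun s => ((M s).det)⁻¹ * (M s).adjugate l r := by
    funext s
    rw [Matrix.inv_def, Matrix.smul_apply, Ring.inverse_eq_inv, smul_eq_mul]
  rw [heq]
  refine DifferentiableAt.mul ((det_diffAt h).inv hdet) ?_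
  have heq2 : (fun s => (M s).adjugate l r)
      = fun s => ((M s).updateRow r (Pi.single l 1)).det := by
    funext s; rw [Matrix.adjugate_apply]
  rw [heq2]
  apply det_diffAt
  intro a b
  by_cases ha : a = r
  · simpa [Matrix.updateRow_apply, ha] using differentiableAt_const _
  · simpa [Matrix.updateRow_apply, ha] using h a b

lemma inv_entry_hasDerivAt {m : ℕ} {M : ℝ → Matrix (Fin m) (Fin m) ℝ}
    (hdiff : ∀ s l r, DifferentiableAt ℝ (fun u => M u l r) s)
    (hu : ∀ s, IsUnit (M s).det)
    {t : ℝ} (M' : Matrix (Fin m) (Fin m) ℝ)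
    (hM' : ∀ l r, HasDerivAt (fun s => M s l r) (M' l r) t) :
    ∀ l r, HasDerivAt (fun s => (M s)⁻¹ l r)
      ((-((M t)⁻¹ * M' * (M t)⁻¹)) l r) t := by
  have hBdiff : ∀ l r, DifferentiableAt ℝ (fun s => (M s)⁻¹ l r) t :=
    inv_entry_diffAt (fun l r => hdiff t l r) (hu t).ne_zero
  set dB : Matrix (Fin m) (Fin m) ℝ :=
    Matrix.of (fun l r => deriv (fun s => (M s)⁻¹ l r) t) with hdBdef
  have hB : ∀ l r, HasDerivAt (fun s => (M s)⁻¹ l r) (dB l r) t := fun l r =>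
    (hBdiff l r).hasDerivAt
  have hzero : ∀ l r, (∑ q, (M' l q * (M t)⁻¹ q r + M t l q * dB q r)) = 0 := by
    intro l r
    have hsum : HasDerivAt (fun s => ∑ q, M s l q * (M s)⁻¹ q r)
        (∑ q, (M' l q * (M t)⁻¹ q r + M t l q * dB q r)) t := by
      apply HasDerivAt.fun_sum
      intro q _
      exact (hM' l q).mul (hB q r)
    have hid : (fun s => ∑ q, M s l q * (M s)⁻¹ q r)
        = fun _ => (1 : Matrix (Fin m) (Fin m) ℝ) l r := by
      funext s
      rw [← Matrix.mul_apply, Matrix.mul_nonsing_inv _ (hu s)]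
    rw [hid] at hsum
    exact hsum.unique (hasDerivAt_const _ _)
  have hmat : M' * (M t)⁻¹ + M t * dB = 0 := by
    ext l r
    simpa [Matrix.mul_apply, Matrix.add_apply, Finset.sum_add_distrib] using hzero l r
  have h4 : M t * dB = -(M' * (M t)⁻¹) := by
    have h := hmat
    rw [add_comm, add_eq_zero_iff_eq_neg] at h
    exact h
  have hdB : dB = -((M t)⁻¹ * M' * (M t)⁻¹) := by
    calc dB = ((M t)⁻¹ * M t) * dB := by
          rw [Matrix.nonsing_inv_mul _ (hu t), Matrix.one_mul]
    _ = (M t)⁻¹ * (M t * dB) := by rw [Matrix.mul_assoc]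
    _ = (M t)⁻¹ * (-(M' * (M t)⁻¹)) := by rw [h4]
    _ = -((M t)⁻¹ * M' * (M t)⁻¹) := by rw [Matrix.mul_neg, Matrix.mul_assoc]
  intro l r
  rw [← hdB]
  exact hB l r

lemma dd_sum {n : ℕ} (x y : Fin n → ℝ) (M : Matrix (Fin n) (Fin n) ℝ) :
    ∑ l, ∑ r, x l * (M l r * y r) = x ⬝ᵥ (M *ᵥ y) := by
  simp [dotProduct, Matrix.mulVec, Finset.mul_sum, mul_assoc]

section Aux
variable {d n : ℕ} {k : (Fin d → ℝ) → (Fin d → ℝ) → ℝ} {σ kmax Lk : ℝ}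

private lemma A_posdef (hpsd : ∀ (m : ℕ) (p : Fin m → (Fin d → ℝ)), (kerMat k p).PosSemidef)
    (hσ : 0 < σ) (p : Fin n → Fin d → ℝ) :
    (kerMat k p + σ^2 • (1 : Matrix (Fin n) (Fin n) ℝ)).PosDef := by
  refine Matrix.PosDef.posSemidef_add (hpsd n p) ?_
  refine Matrix.PosDef.of_dotProduct_mulVec_pos ?_ ?_
  · simp [Matrix.IsHermitian, Matrix.conjTranspose, Matrix.transpose_smul]
    rfl
  · intro x hx
    have : star x ⬝ᵥ ((σ^2 • (1 : Matrix (Fin n) (Fin n) ℝ)) *ᵥ x) = σ^2 * (star x ⬝ᵥ x) := by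
      rw [Matrix.smul_mulVec, Matrix.one_mulVec, dotProduct_smul, smul_eq_mul]
    rw [this]
    exact mul_pos (by positivity) (Matrix.dotProduct_star_self_pos_iff.mpr hx)


private lemma quad_bound (hsymm : ∀ x y, k x y = k y x)
    (hpsd : ∀ (m : ℕ) (p : Fin m → (Fin d → ℝ)), (kerMat k p).PosSemidef)
    (hkbound : ∀ x y, k x y ≤ kmax) (hσ : 0 < σ)
    (p : Fin n → Fin d → ℝ) (z : Fin d → ℝ)
    (hdet : IsUnit (kerMat k p + σ^2 • (1 : Matrix (Fin n) (Fin n) ℝ)).det) :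
    ∑ l, (((kerMat k p + σ^2 • (1 : Matrix (Fin n) (Fin n) ℝ))⁻¹ *ᵥ fun l => k (p l) z) l)^2
      ≤ kmax / σ^2 := by
  set A := kerMat k p + σ^2 • (1 : Matrix (Fin n) (Fin n) ℝ) with hAdef
  set v : Fin n → ℝ := fun l => k (p l) z with hvdef
  set w : Fin n → ℝ := A⁻¹ *ᵥ v with hwdef
  have hAw : A *ᵥ w = v := by
    rw [hwdef, Matrix.mulVec_mulVec, Matrix.mul_nonsing_inv _ hdet, Matrix.one_mulVec]
  have hv : ∀ l, v l = (∑ m, k (p l) (p m) * w m) + σ^2 * w l := by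
    intro l
    have := congrFun hAw l
    rw [Matrix.mulVec] at this
    simp only [dotProduct, hAdef, Matrix.add_apply, Matrix.smul_apply, Matrix.one_apply,
      kerMat, Matrix.of_apply, add_mul, Finset.sum_add_distrib, smul_eq_mul,
      mul_ite, mul_one, mul_zero, ite_mul, zero_mul, Finset.sum_ite_eq, Finset.mem_univ,
      if_true] at this
    linarith [this]
  set W := ∑ l, (w l)^2 with hWdef
  set S1 := ∑ l, v l * w l with hS1def
  set S2 := ∑ l, w l * ∑ m, k (p l) (p m) * w m with hS2def
  have hW0 : 0 ≤ W := Finset.sum_nonneg fun l _ => sq_nonneg _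
  have h1 : S1 = S2 + σ^2 * W := by
    rw [hS1def, hS2def, hWdef, Finset.mul_sum, ← Finset.sum_add_distrib]
    refine Finset.sum_congr rfl fun l _ => ?_
    rw [hv l]; ring
  have h2 : 0 ≤ S2 := by
    have := (hpsd n p).dotProduct_mulVec_nonneg w
    simpa [Matrix.mulVec, dotProduct, kerMat, hS2def] using this
  have h3 : 0 ≤ k z z - S1 - S1 + S2 := by
    have hq := (hpsd (n+1) (Fin.cons z p)).dotProduct_mulVec_nonneg (Fin.cons (1:ℝ) (fun l => -w l))
    have exp : star (Fin.cons (1:ℝ) (fun l => -w l)) ⬝ᵥ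
        (kerMat k (Fin.cons z p) *ᵥ Fin.cons (1:ℝ) (fun l => -w l)) =
        k z z - S1 - S1 + S2 := by
      simp only [Matrix.mulVec, dotProduct, kerMat, Matrix.of_apply, star_trivial,
        Fin.sum_univ_succ, Fin.cons_zero, Fin.cons_succ]
      have hz : ∀ x, k z (p x) = k (p x) z := fun x => hsymm z (p x)
      simp only [mul_neg, neg_mul, mul_one, one_mul, hz, hS1def, hS2def, hvdef]
      simp only [mul_add, mul_neg, neg_neg, Finset.sum_add_distrib, Finset.sum_neg_distrib]
      ring_nf
      have hcomm : ∑ x, w x * k (p x) z = ∑ x, k (p x) z * w x :=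
        Finset.sum_congr rfl fun x _ => mul_comm _ _
      rw [hcomm]; ring
    rw [exp] at hq; exact hq
  have hk1 : k z z ≤ kmax := hkbound z z
  have hσ2 : (0:ℝ) < σ^2 := by positivity
  rw [le_div_iff₀ hσ2]
  nlinarith [h1, h2, h3, hk1, hW0]

private lemma key (hsymm : ∀ x y, k x y = k y x)
    (hpsd : ∀ (m : ℕ) (p : Fin m → (Fin d → ℝ)), (kerMat k p).PosSemidef)
    (hsmooth : ContDiff ℝ 1 (fun p : (Fin d → ℝ) × (Fin d → ℝ) => k p.1 p.2))
    (hLk : 0 ≤ Lk)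
    (hderiv : ∀ (p : (Fin d → ℝ) × (Fin d → ℝ)) (i : Fin d),
      |fderiv ℝ (fun q : (Fin d → ℝ) × (Fin d → ℝ) => k q.1 q.2) p (Pi.single i 1, 0)| ≤ Lk ∧
      |fderiv ℝ (fun q : (Fin d → ℝ) × (Fin d → ℝ) => k q.1 q.2) p (0, Pi.single i 1)| ≤ Lk)
    (hkmax : 0 < kmax) (hkbound : ∀ x y, k x y ≤ kmax)
    (xref : Fin d → ℝ) (hσ : 0 < σ)
    (P : Fin n → Fin d → ℝ) (j : Fin n) (i : Fin d) (a b : ℝ) :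
    |postVar k σ (Function.update P j (Function.update (P j) i a)) xref
      - postVar k σ (Function.update P j (Function.update (P j) i b)) xref|
      ≤ (2 * Lk * Real.sqrt kmax / σ * (1 + Real.sqrt (↑n * kmax) / σ)) * |a - b| := by
  classical
  set K : (Fin d → ℝ) × (Fin d → ℝ) → ℝ := fun q => k q.1 q.2 with hKdef
  set L : ℝ := 2 * Lk * Real.sqrt kmax / σ * (1 + Real.sqrt (↑n * kmax) / σ) with hLdef
  set p : ℝ → (Fin n → Fin d → ℝ) :=
    fun t => Function.update P j (Function.update (P j) i t) with hpdef
  set e : Fin n → (Fin d → ℝ) := fun l => if l = j then Pi.single i (1:ℝ) else 0 with hedef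
  set A : ℝ → Matrix (Fin n) (Fin n) ℝ :=
    fun t => kerMat k (p t) + σ^2 • (1 : Matrix (Fin n) (Fin n) ℝ) with hAdef
  set v : ℝ → (Fin n → ℝ) := fun t l => k (p t l) xref with hvdef
  have hKdiff : Differentiable ℝ K := hsmooth.differentiable one_ne_zero
  -- curve derivatives
  have hp : ∀ (t : ℝ) (l : Fin n), HasDerivAt (fun s => p s l) (e l) t := by
    intro t l
    by_cases hl : l = j
    · subst hl
      have : (fun s => p s l) = Function.update (P l) i := by
        funext s; simp [hpdef, Function.update_self]
      rw [this, hedef]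
      simpa using hasDerivAt_update (P l) i t
    · have : (fun s => p s l) = fun _ => P l := by
        funext s; simp [hpdef, Function.update_of_ne hl]
      rw [this, hedef]
      simpa [hl] using hasDerivAt_const t (P l)
  -- entry derivatives of A
  have hAder : ∀ (t : ℝ) (l r : Fin n), HasDerivAt (fun s => A s l r)
      (fderiv ℝ K (p t l, p t r) (e l, e r)) t := by
    intro t l r
    have hc : HasDerivAt (fun s => ((p s l, p s r) : (Fin d → ℝ) × (Fin d → ℝ)))
        (e l, e r) t := (hp t l).prodMk (hp t r)
    have hk1 : HasDerivAt (fun s => K (p s l, p s r))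
        (fderiv ℝ K (p t l, p t r) (e l, e r)) t :=
      (hKdiff _).hasFDerivAt.comp_hasDerivAt t hc
    have : (fun s => A s l r) = fun s => K (p s l, p s r)
        + (σ^2 • (1 : Matrix (Fin n) (Fin n) ℝ)) l r := by
      funext s; simp [hAdef, kerMat, hKdef]
    rw [this]
    exact hk1.add_const _
  have hvder : ∀ (t : ℝ) (l : Fin n), HasDerivAt (fun s => v s l)
      (fderiv ℝ K (p t l, xref) (e l, 0)) t := by
    intro t l
    have hc : HasDerivAt (fun s => ((p s l, xref) : (Fin d → ℝ) × (Fin d → ℝ)))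
        (e l, 0) t := (hp t l).prodMk (hasDerivAt_const t xref)
    exact (hKdiff _).hasFDerivAt.comp_hasDerivAt t hc
  have hdet : ∀ t, IsUnit (A t).det := fun t =>
    (A_posdef hpsd hσ (p t)).det_pos.ne'.isUnit
  -- symmetry of A and its inverse
  have hAsymm : ∀ t, (A t)ᵀ = A t := by
    intro t
    rw [hAdef]
    ext l r
    simp [Matrix.transpose_apply, kerMat, Matrix.one_apply, hsymm (p t r) (p t l)]
    by_cases h : l = r <;> simp [h, eq_comm]
  have hBsymm : ∀ t, ((A t)⁻¹)ᵀ = (A t)⁻¹ := by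
    intro t; rw [Matrix.transpose_nonsing_inv, hAsymm]
  set u : ℝ → (Fin n → ℝ) := fun t => (A t)⁻¹ *ᵥ v t with hudef
  have hdot : ∀ (t : ℝ) (w : Fin n → ℝ), v t ⬝ᵥ ((A t)⁻¹ *ᵥ w) = u t ⬝ᵥ w := by
    intro t w
    rw [Matrix.dotProduct_mulVec, ← Matrix.mulVec_transpose, hBsymm]
  -- derivative of ψ
  set A' : ℝ → Matrix (Fin n) (Fin n) ℝ :=
    fun t => Matrix.of fun l r => fderiv ℝ K (p t l, p t r) (e l, e r) with hA'def
  set v' : ℝ → (Fin n → ℝ) := fun t l => fderiv ℝ K (p t l, xref) (e l, 0) with hv'def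
  set D : ℝ → ℝ := fun t => 2 * (v' t ⬝ᵥ u t) - u t ⬝ᵥ (A' t *ᵥ u t) with hDdef
  have hψ : ∀ t : ℝ, HasDerivAt (fun s => v s ⬝ᵥ ((A s)⁻¹ *ᵥ v s)) (D t) t := by
    intro t
    have hBder := inv_entry_hasDerivAt (M := A)
      (fun s l r => (hAder s l r).differentiableAt) hdet (A' t) (hAder t)
    have hraw : HasDerivAt (fun s => ∑ l, ∑ r, v s l * ((A s)⁻¹ l r * v s r))
        (∑ l, ∑ r, (v' t l * ((A t)⁻¹ l r * v t r)
          + v t l * ((-((A t)⁻¹ * A' t * (A t)⁻¹)) l r * v t r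
            + (A t)⁻¹ l r * v' t r))) t := by
      apply HasDerivAt.fun_sum; intro l _
      apply HasDerivAt.fun_sum; intro r _
      exact (hvder t l).mul ((hBder l r).mul (hvder t r))
    have heqfun : (fun s => ∑ l, ∑ r, v s l * ((A s)⁻¹ l r * v s r))
        = fun s => v s ⬝ᵥ ((A s)⁻¹ *ᵥ v s) := by
      funext s; rw [dd_sum]
    rw [heqfun] at hraw
    convert hraw using 1
    have hsplit : ∀ l r, v' t l * ((A t)⁻¹ l r * v t r)
          + v t l * ((-((A t)⁻¹ * A' t * (A t)⁻¹)) l r * v t r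
            + (A t)⁻¹ l r * v' t r)
        = v' t l * ((A t)⁻¹ l r * v t r)
          + v t l * ((-((A t)⁻¹ * A' t * (A t)⁻¹)) l r * v t r)
          + v t l * ((A t)⁻¹ l r * v' t r) := by
      intro l r; ring
    simp only [hsplit, Finset.sum_add_distrib]
    rw [dd_sum, dd_sum, dd_sum]
    -- three dot products
    have h1 : v' t ⬝ᵥ ((A t)⁻¹ *ᵥ v t) = v' t ⬝ᵥ u t := rfl
    have h3 : v t ⬝ᵥ ((A t)⁻¹ *ᵥ v' t) = v' t ⬝ᵥ u t := by
      rw [hdot t (v' t), dotProduct_comm]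
    have h2 : v t ⬝ᵥ ((-((A t)⁻¹ * A' t * (A t)⁻¹)) *ᵥ v t)
        = -(u t ⬝ᵥ (A' t *ᵥ u t)) := by
      rw [Matrix.neg_mulVec, dotProduct_neg]
      congr 1
      rw [← Matrix.mulVec_mulVec, ← Matrix.mulVec_mulVec, hdot]
    rw [h1, h2, h3, hDdef]
    ring
  -- bounds
  have hbound : ∀ t : ℝ, |D t| ≤ L := by
    intro t
    have hq : ∑ l, (u t l)^2 ≤ kmax / σ^2 :=
      quad_bound hsymm hpsd hkbound hσ (p t) xref (hdet t)
    have hu0 : ∀ l, (u t l)^2 ≤ kmax / σ^2 := by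
      intro l
      exact le_trans (Finset.single_le_sum (f := fun l => (u t l)^2)
        (fun l _ => sq_nonneg _) (Finset.mem_univ l)) hq
    have hsqrt_div : Real.sqrt (kmax / σ^2) = Real.sqrt kmax / σ := by
      rw [Real.sqrt_div hkmax.le, Real.sqrt_sq hσ.le]
    have huj : ∀ l, |u t l| ≤ Real.sqrt kmax / σ := by
      intro l
      rw [← hsqrt_div, ← Real.sqrt_sq_eq_abs]
      exact Real.sqrt_le_sqrt (hu0 l)
    have hS : ∑ l, |u t l| ≤ Real.sqrt (↑n * kmax) / σ := by
      have hcs := Finset.sum_mul_sq_le_sq_mul_sq Finset.univ (fun _ : Fin n => (1:ℝ))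
        (fun l => |u t l|)
      simp only [one_mul, one_pow, Finset.sum_const, Finset.card_univ, Fintype.card_fin,
        nsmul_eq_mul, mul_one, sq_abs] at hcs
      have h2 : (∑ l, |u t l|)^2 ≤ ↑n * (kmax / σ^2) := by
        refine le_trans hcs ?_
        exact mul_le_mul_of_nonneg_left hq (Nat.cast_nonneg n)
      have h3 : Real.sqrt ((∑ l, |u t l|)^2) ≤ Real.sqrt (↑n * (kmax / σ^2)) :=
        Real.sqrt_le_sqrt h2
      rw [Real.sqrt_sq (Finset.sum_nonneg fun l _ => abs_nonneg _)] at h3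
      have h4 : Real.sqrt (↑n * (kmax / σ^2)) = Real.sqrt (↑n * kmax) / σ := by
        rw [← mul_div_assoc, Real.sqrt_div (by positivity), Real.sqrt_sq hσ.le]
      rwa [h4] at h3
    have hv'b : ∀ l, |v' t l| ≤ (if l = j then Lk else 0) := by
      intro l
      by_cases hl : l = j
      · subst hl
        simp only [hv'def, hedef, if_pos rfl, if_pos rfl]
        exact (hderiv (p t l, xref) i).1
      · simp only [hv'def, hedef, if_neg hl]
        have : ((0 : Fin d → ℝ), (0 : Fin d → ℝ)) = (0 : (Fin d → ℝ) × (Fin d → ℝ)) := rfl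
        rw [this, map_zero]
        simp
    have hA'b : ∀ l r, |A' t l r| ≤ (if l = j then Lk else 0) + (if r = j then Lk else 0) := by
      intro l r
      have hsplitlr : ((e l, e r) : (Fin d → ℝ) × (Fin d → ℝ))
          = ((e l, 0) : (Fin d → ℝ) × (Fin d → ℝ)) + ((0, e r) : (Fin d → ℝ) × (Fin d → ℝ)) := by
        simp [Prod.ext_iff]
      have : A' t l r = fderiv ℝ K (p t l, p t r) (e l, 0)
          + fderiv ℝ K (p t l, p t r) (0, e r) := by
        rw [hA'def]
        simp only [Matrix.of_apply]
        rw [hsplitlr, map_add]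
      rw [this]
      refine le_trans (abs_add_le _ _) (add_le_add ?_ ?_)
      · by_cases hl : l = j
        · subst hl
          simp only [hedef, if_pos rfl]
          exact (hderiv (p t l, p t r) i).1
        · simp only [hedef, if_neg hl]
          have hz : ((0 : Fin d → ℝ), (0 : Fin d → ℝ)) = (0 : (Fin d → ℝ) × (Fin d → ℝ)) := rfl
          rw [hz, map_zero]
          simp
      · by_cases hr : r = j
        · subst hr
          simp only [hedef, if_pos rfl]
          exact (hderiv (p t l, p t r) i).2
        · simp only [hedef, if_neg hr]
          have hz : ((0 : Fin d → ℝ), (0 : Fin d → ℝ)) = (0 : (Fin d → ℝ) × (Fin d → ℝ)) := rfl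
          rw [hz, map_zero]
          simp
    -- |v' ⬝ᵥ u| ≤ Lk * |u j|
    have hT1 : |v' t ⬝ᵥ u t| ≤ Lk * |u t j| := by
      refine le_trans (Finset.abs_sum_le_sum_abs _ _) ?_
      have : ∀ l, |v' t l * u t l| ≤ (if l = j then Lk * |u t l| else 0) := by
        intro l
        rw [abs_mul]
        by_cases hl : l = j
        · simp only [if_pos hl]
          exact mul_le_mul_of_nonneg_right (by simpa [hl] using hv'b l) (abs_nonneg _)
        · simp only [if_neg hl]
          have := hv'b l
          rw [if_neg hl] at this
          nlinarith [abs_nonneg (v' t l), abs_nonneg (u t l)]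
      refine le_trans (Finset.sum_le_sum fun l _ => this l) ?_
      rw [Finset.sum_ite_eq' Finset.univ j (fun l => Lk * |u t l|)]
      simp
    -- |u ⬝ᵥ A' u| ≤ 2 Lk |u j| * ∑|u|
    have hT2 : |u t ⬝ᵥ (A' t *ᵥ u t)| ≤ 2 * Lk * |u t j| * ∑ l, |u t l| := by
      have expand : u t ⬝ᵥ (A' t *ᵥ u t) = ∑ l, u t l * ∑ r, A' t l r * u t r := by
        simp [dotProduct, Matrix.mulVec]
      have step1 : |u t ⬝ᵥ (A' t *ᵥ u t)|
          ≤ ∑ l, |u t l| * ∑ r, |A' t l r| * |u t r| := by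
        rw [expand]
        refine le_trans (Finset.abs_sum_le_sum_abs _ _) (Finset.sum_le_sum fun l _ => ?_)
        rw [abs_mul]
        refine mul_le_mul_of_nonneg_left ?_ (abs_nonneg _)
        refine le_trans (Finset.abs_sum_le_sum_abs _ _) (Finset.sum_le_sum fun r _ => ?_)
        exact le_of_eq (abs_mul _ _)
      have step2 : ∑ l, |u t l| * ∑ r, |A' t l r| * |u t r|
          ≤ ∑ l, |u t l| * ∑ r, ((if l = j then Lk else 0) + (if r = j then Lk else 0)) * |u t r| := by
        refine Finset.sum_le_sum fun l _ => mul_le_mul_of_nonneg_left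
          (Finset.sum_le_sum fun r _ => mul_le_mul_of_nonneg_right (hA'b l r) (abs_nonneg _))
          (abs_nonneg _)
      have inner : ∀ l, ∑ r, ((if l = j then Lk else 0) + (if r = j then Lk else 0)) * |u t r|
          = (if l = j then Lk else 0) * (∑ r, |u t r|) + Lk * |u t j| := by
        intro l
        simp only [add_mul]
        rw [Finset.sum_add_distrib, ← Finset.mul_sum]
        congr 1
        simp only [ite_mul, zero_mul]
        rw [Finset.sum_ite_eq' Finset.univ j (fun r => Lk * |u t r|)]
        simp
      have step3 : ∑ l, |u t l| * ((if l = j then Lk else 0) * (∑ r, |u t r|) + Lk * |u t j|)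
          = 2 * Lk * |u t j| * ∑ l, |u t l| := by
        simp only [mul_add, Finset.sum_add_distrib]
        rw [← Finset.sum_mul]
        have : ∀ l, |u t l| * ((if l = j then Lk else 0) * (∑ r, |u t r|))
            = (if l = j then |u t l| * (Lk * (∑ r, |u t r|)) else 0) := by
          intro l; by_cases hl : l = j <;> simp [hl]
        simp only [this]
        rw [Finset.sum_ite_eq' Finset.univ j (fun l => |u t l| * (Lk * ∑ r, |u t r|))]
        simp only [Finset.mem_univ, if_true]
        ring
      calc |u t ⬝ᵥ (A' t *ᵥ u t)| ≤ ∑ l, |u t l| * ∑ r, |A' t l r| * |u t r| := step1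
      _ ≤ ∑ l, |u t l| * ∑ r, ((if l = j then Lk else 0) + (if r = j then Lk else 0)) * |u t r| := step2
      _ = ∑ l, |u t l| * ((if l = j then Lk else 0) * (∑ r, |u t r|) + Lk * |u t j|) := by
          refine Finset.sum_congr rfl fun l _ => ?_
          rw [inner l]
      _ = 2 * Lk * |u t j| * ∑ l, |u t l| := step3
    -- assemble
    have hS0 : (0:ℝ) ≤ ∑ l, |u t l| := Finset.sum_nonneg fun l _ => abs_nonneg _
    have hDb : |D t| ≤ 2 * Lk * |u t j| + 2 * Lk * |u t j| * ∑ l, |u t l| := by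
      rw [hDdef]
      refine le_trans (abs_sub _ _) ?_
      rw [abs_mul, abs_two]
      linarith [hT1, hT2]
    have hprod : |u t j| * (∑ l, |u t l|) ≤ (Real.sqrt kmax / σ) * (Real.sqrt (↑n * kmax) / σ) :=
      mul_le_mul (huj j) hS (by positivity) (by positivity)
    have hL : L = 2 * Lk * (Real.sqrt kmax / σ) + 2 * Lk * ((Real.sqrt kmax / σ) * (Real.sqrt (↑n * kmax) / σ)) := by
      rw [hLdef]; ring
    rw [hL]
    have h1 : 2 * Lk * |u t j| ≤ 2 * Lk * (Real.sqrt kmax / σ) :=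
      mul_le_mul_of_nonneg_left (huj j) (by positivity)
    have h2 : 2 * Lk * |u t j| * (∑ l, |u t l|)
        ≤ 2 * Lk * ((Real.sqrt kmax / σ) * (Real.sqrt (↑n * kmax) / σ)) := by
      calc 2 * Lk * |u t j| * (∑ l, |u t l|) = 2 * Lk * (|u t j| * ∑ l, |u t l|) := by ring
      _ ≤ 2 * Lk * ((Real.sqrt kmax / σ) * (Real.sqrt (↑n * kmax) / σ)) :=
          mul_le_mul_of_nonneg_left hprod (by positivity)
    linarith
  -- mean value
  have hφ : ∀ t : ℝ, HasDerivAt (fun s => postVar k σ (p s) xref) (-(D t)) t := by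
    intro t
    have heq : (fun s => postVar k σ (p s) xref)
        = fun s => k xref xref - v s ⬝ᵥ ((A s)⁻¹ *ᵥ v s) := rfl
    rw [heq]
    simpa using (hψ t).const_sub (k xref xref)
  have hmv := convex_univ.norm_image_sub_le_of_norm_hasDerivWithin_le
    (f := fun s => postVar k σ (p s) xref) (f' := fun t => -(D t))
    (fun x _ => (hφ x).hasDerivWithinAt)
    (fun x _ => by rw [Real.norm_eq_abs, abs_neg]; exact hbound x)
    (Set.mem_univ b) (Set.mem_univ a)
  simpa [Real.norm_eq_abs] using hmv

end Aux
end AuxLemmas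

/-- **Corollary 4 of the paper.** For a symmetric PSD kernel `k`
that is continuously differentiable, with all first-order partial derivatives
bounded in absolute value by `L_k` and with `k ≤ k_max`, the map sending the
data tuple `(x₁,…,xₙ)` to the GP posterior variance `σ²_{(x₁,…,xₙ)}(x_ref)` is
Lipschitz with respect to the ℓ¹-norm on `(ℝᵈ)ⁿ`, with constant
`L_σ = (2L_k√k_max/σ)(1 + √(n·k_max)/σ)`. -/
theorem posterior_variance_lipschitz (d : ℕ)
    (k : (Fin d → ℝ) → (Fin d → ℝ) → ℝ)
    (hsymm : ∀ x y, k x y = k y x)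
    (hpsd : ∀ (m : ℕ) (p : Fin m → (Fin d → ℝ)), (kerMat k p).PosSemidef)
    (hsmooth : ContDiff ℝ 1 (fun p : (Fin d → ℝ) × (Fin d → ℝ) => k p.1 p.2))
    (Lk : ℝ) (hLk : 0 ≤ Lk)
    (hderiv : ∀ (p : (Fin d → ℝ) × (Fin d → ℝ)) (i : Fin d),
      |fderiv ℝ (fun q : (Fin d → ℝ) × (Fin d → ℝ) => k q.1 q.2) p (Pi.single i 1, 0)| ≤ Lk ∧
      |fderiv ℝ (fun q : (Fin d → ℝ) × (Fin d → ℝ) => k q.1 q.2) p (0, Pi.single i 1)| ≤ Lk)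
    (kmax : ℝ) (hkmax : 0 < kmax) (hkbound : ∀ x y, k x y ≤ kmax)
    (xref : Fin d → ℝ) (σ : ℝ) (hσ : 0 < σ) (n : ℕ) :
    ∀ X Y : Fin n → (Fin d → ℝ),
      |postVar k σ X xref - postVar k σ Y xref| ≤
        (2 * Lk * Real.sqrt kmax / σ) * (1 + Real.sqrt (n * kmax) / σ) *
          ∑ j : Fin n, ∑ i : Fin d, |X j i - Y j i| := by
  classical
  intro X Y
  set L : ℝ := 2 * Lk * Real.sqrt kmax / σ * (1 + Real.sqrt (↑n * kmax) / σ) with hLdef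
  have step : ∀ (P : Fin n → Fin d → ℝ) (j : Fin n) (i : Fin d) (c : ℝ),
      |postVar k σ P xref
        - postVar k σ (Function.update P j (Function.update (P j) i c)) xref|
        ≤ L * |P j i - c| := by
    intro P j i c
    have h := key hsymm hpsd hsmooth hLk hderiv hkmax hkbound xref hσ P j i (P j i) c
    rwa [Function.update_eq_self i (P j), Function.update_eq_self j P] at h
  set cfg : Finset (Fin n × Fin d) → (Fin n → Fin d → ℝ) :=
    fun s l i' => if (l, i') ∈ s then Y l i' else X l i' with hcfgdef
  have claim : ∀ s : Finset (Fin n × Fin d),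
      |postVar k σ X xref - postVar k σ (cfg s) xref|
        ≤ L * ∑ q ∈ s, |X q.1 q.2 - Y q.1 q.2| := by
    intro s
    induction s using Finset.induction_on with
    | empty => simp [hcfgdef]
    | @insert a s ha ih =>
      obtain ⟨j0, i0⟩ := a
      have hcfg : cfg (insert (j0, i0) s)
          = Function.update (cfg s) j0 (Function.update (cfg s j0) i0 (Y j0 i0)) := by
        funext l i'
        by_cases hl : l = j0 <;> by_cases hi : i' = i0 <;>
          simp [hl, hi, hcfgdef, Finset.mem_insert, Prod.mk.injEq, Function.update_apply]
      have htri : |postVar k σ X xref - postVar k σ (cfg (insert (j0, i0) s)) xref|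
          ≤ |postVar k σ X xref - postVar k σ (cfg s) xref|
            + |postVar k σ (cfg s) xref - postVar k σ (cfg (insert (j0, i0) s)) xref| :=
        abs_sub_le _ _ _
      have hstep : |postVar k σ (cfg s) xref - postVar k σ (cfg (insert (j0, i0) s)) xref|
          ≤ L * |X j0 i0 - Y j0 i0| := by
        rw [hcfg]
        have h := step (cfg s) j0 i0 (Y j0 i0)
        have hXa : cfg s j0 i0 = X j0 i0 := by
          simp [hcfgdef, ha]
        rwa [hXa] at h
      rw [Finset.sum_insert ha, mul_add]
      have hsum' : |X (j0, i0).1 (j0, i0).2 - Y (j0, i0).1 (j0, i0).2|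
          = |X j0 i0 - Y j0 i0| := rfl
      rw [hsum']
      linarith
  have hY : cfg Finset.univ = Y := by
    funext l i'; simp [hcfgdef]
  have hfinal := claim Finset.univ
  rw [hY] at hfinal
  have hsum : ∑ q : Fin n × Fin d, |X q.1 q.2 - Y q.1 q.2|
      = ∑ j : Fin n, ∑ i : Fin d, |X j i - Y j i| := by
    exact Fintype.sum_prod_type _
  rw [hsum] at hfinal
  calc |postVar k σ X xref - postVar k σ Y xref|
      ≤ L * ∑ j : Fin n, ∑ i : Fin d, |X j i - Y j i| := hfinal
  _ = (2 * Lk * Real.sqrt kmax / σ) * (1 + Real.sqrt (↑n * kmax) / σ)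
        * ∑ j : Fin n, ∑ i : Fin d, |X j i - Y j i| := by rw [hLdef]
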